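/- If M contains no IFS invariants and the ACS invariants have no side effects in the sense that ⋃ get_offending_flows (getACS M) (V, E ∪ backflows(E)) ⊆ backflows(E) \ E holds, then generate1 G M E (run over all edges) returns E_σ with E ∖ backflows(E) ⊆ E_σ, so that α (generate1 G M E) = (V, E ∪ backflows(E)). -/

import Mathlib

def backflows {α : Type*} (X : Set (α × α)) : Set (α × α) :=
  {e | (e.2, e.1) ∈ X}

def offending_flows {α : Type*} (m : Set α → Set (α × α) → Prop)
    (V : Set α) (E : Set (α × α)) : Set (Set (α × α)) :=
  {F | F ⊆ E ∧ ¬ m V E ∧ m V (E \ F) ∧ ∀ e ∈ F, ¬ m V ((E \ F) ∪ {e})}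

def get_offending_flows {α : Type*} (M : Set (Set α → Set (α × α) → Prop))
    (V : Set α) (E : Set (α × α)) : Set (Set (α × α)) :=
  ⋃ m ∈ M, offending_flows m V E

inductive Strategy : Type
  | IFS : Strategy
  | ACS : Strategy

structure SecurityInvariant (α : Type*) where
  pred : Set α → Set (α × α) → Prop
  strat : Strategy

/-- the predicates of the IFS-tagged invariants -/
def getIFS {α : Type*} (M : Set (SecurityInvariant α)) :
    Set (Set α → Set (α × α) → Prop) :=
  {f | ∃ m ∈ M, m.strat = Strategy.IFS ∧ f = m.pred}

/-- the predicates of the ACS-tagged invariants -/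
def getACS {α : Type*} (M : Set (SecurityInvariant α)) :
    Set (Set α → Set (α × α) → Prop) :=
  {f | ∃ m ∈ M, m.strat = Strategy.ACS ∧ f = m.pred}

open Classical in
/-- greedy IFS filter; list accumulators are read as sets via `{x | x ∈ ·}` -/
noncomputable def filterIFS {α : Type*} (V : Set α) (E : Set (α × α))
    (M : Set (SecurityInvariant α)) :
    List (α × α) → List (α × α) → List (α × α)
  | a, [] => a
  | a, e :: es =>
    if ∀ m ∈ getIFS M,
        m V (E ∪ {x | x ∈ e :: a} ∪ backflows {x | x ∈ e :: a})
    then filterIFS V E M (e :: a) es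
    else filterIFS V E M a es

open Classical in
/-- greedy ACS filter -/
noncomputable def filterACS {α : Type*} (V : Set α) (E : Set (α × α))
    (M : Set (SecurityInvariant α)) :
    List (α × α) → List (α × α) → List (α × α)
  | a, [] => a
  | a, e :: es =>
    if e ∉ backflows E ∧
        ∀ F ∈ get_offending_flows (getACS M) V
            (E ∪ {x | x ∈ e :: a} ∪ backflows {x | x ∈ e :: a}),
          F ⊆ backflows {x | x ∈ e :: a}
    then filterACS V E M (e :: a) es
    else filterACS V E M a es
/-! ### auxiliary lemmas -/

lemma exists_offending {α : Type*} (m : Set α → Set (α × α) → Prop) (V : Set α)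
    (hm : ∀ E₁ E₂ : Set (α × α), m V E₁ → E₂ ⊆ E₁ → m V E₂)
    (X : Set (α × α)) (hXfin : X.Finite) (hX : ¬ m V X) :
    ∀ (n : ℕ) (F : Set (α × α)), F.ncard = n → F ⊆ X → m V (X \ F) →
      ∀ f ∈ F, ¬ m V ((X \ F) ∪ {f}) →
      ∃ F', F' ∈ offending_flows m V X ∧ f ∈ F' := by
  intro n
  induction n using Nat.strong_induction_on with
  | _ n IH =>
    intro F hcard hFX hmF f hfF hf
    by_cases hmin : ∀ e ∈ F, ¬ m V ((X \ F) ∪ {e})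
    · exact ⟨F, ⟨hFX, hX, hmF, hmin⟩, hfF⟩
    · push_neg at hmin
      obtain ⟨e, heF, hme⟩ := hmin
      have hFfin : F.Finite := hXfin.subset hFX
      have hlt : (F \ {e}).ncard < n := by
        rw [← hcard]
        exact Set.ncard_diff_singleton_lt_of_mem heF hFfin
      have hef : e ≠ f := by
        rintro rfl; exact hf hme
      have hXdiff : X \ (F \ {e}) = (X \ F) ∪ {e} := by
        ext x
        simp only [Set.mem_diff, Set.mem_union, Set.mem_singleton_iff]
        constructor
        · rintro ⟨hx, h2⟩
          by_cases hxe : x = e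
          · exact Or.inr hxe
          · exact Or.inl ⟨hx, fun hxF => h2 ⟨hxF, hxe⟩⟩
        · rintro (⟨hx, h2⟩ | rfl)
          · exact ⟨hx, fun h => h2 h.1⟩
          · exact ⟨hFX heF, fun h => h.2 rfl⟩
      refine IH _ hlt (F \ {e}) rfl (hFX.trans' Set.diff_subset) ?_ f ⟨hfF, hef.symm⟩ ?_
      · rw [hXdiff]; exact hme
      · rw [hXdiff]
        intro hmm
        exact hf (hm _ _ hmm (Set.union_subset_union_left _ Set.subset_union_left))

lemma filterIFS_noIFS {α : Type*} (V : Set α) (E : Set (α × α))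
    (M : Set (SecurityInvariant α)) (h : getIFS M = ∅) :
    ∀ (l a : List (α × α)), filterIFS V E M a l = l.reverse ++ a := by
  intro l
  induction l with
  | nil => intro a; rfl
  | cons e es ih =>
    intro a
    rw [filterIFS, if_pos (by simp [h])]
    rw [ih (e :: a)]
    simp

lemma backflows_eq_image {α : Type*} (E : Set (α × α)) :
    backflows E = Prod.swap '' E := by
  ext e
  constructor
  · intro h
    exact ⟨(e.2, e.1), h, by simp⟩
  · rintro ⟨x, hx, rfl⟩
    simpa [backflows] using hx

lemma cond_holds {α : Type*} (M : Set (SecurityInvariant α))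
    (V : Set α) (E : Set (α × α)) (hEfin : E.Finite)
    (h_mono : ∀ m ∈ getACS M, ∀ (E₁ E₂ : Set (α × α)), m V E₁ → E₂ ⊆ E₁ → m V E₂)
    (h_nosideeffects :
      ⋃₀ get_offending_flows (getACS M) V (E ∪ backflows E) ⊆ backflows E \ E)
    (a : List (α × α)) (e : α × α) (ha : {x | x ∈ a} ⊆ E) (he : e ∈ E \ backflows E) :
    e ∉ backflows E ∧
      ∀ F ∈ get_offending_flows (getACS M) V
          (E ∪ {x | x ∈ e :: a} ∪ backflows {x | x ∈ e :: a}),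
        F ⊆ backflows {x | x ∈ e :: a} := by
  refine ⟨he.2, ?_⟩
  set S : Set (α × α) := {x | x ∈ e :: a} with hSdef
  have hSE : S ⊆ E := by
    intro x hx
    rcases List.mem_cons.mp hx with rfl | hx
    · exact he.1
    · exact ha hx
  set G' : Set (α × α) := E ∪ S ∪ backflows S with hG'def
  set G : Set (α × α) := E ∪ backflows E with hGdef
  have hG'G : G' ⊆ G := by
    apply Set.union_subset (Set.union_subset _ _)
    · exact fun x hx => Or.inr (hSE hx)
    · exact Set.subset_union_left
    · exact fun x hx => Or.inl (hSE hx)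
  have hGfin : G.Finite := by
    apply hEfin.union
    rw [backflows_eq_image]
    exact hEfin.image _
  intro F hF
  simp only [get_offending_flows, Set.mem_iUnion] at hF
  obtain ⟨m, hmACS, hFoff⟩ := hF
  obtain ⟨hFG', hnG', hmF, hminF⟩ := hFoff
  intro f hfF
  by_contra hfb
  have hfE : f ∈ E := by
    rcases hFG' hfF with (hf | hf) | hf
    · exact hf
    · exact hSE hf
    · exact absurd hf hfb
  have hnG : ¬ m V G := fun h => hnG' (h_mono m hmACS G G' h hG'G)
  have hGF : G \ (G \ (G' \ F)) = G' \ F :=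
    Set.diff_diff_cancel_left ((Set.diff_subset).trans hG'G)
  obtain ⟨F', hF'off, hfF'⟩ :=
    exists_offending m V (h_mono m hmACS) G hGfin hnG _ (G \ (G' \ F)) rfl
      Set.diff_subset (by rw [hGF]; exact hmF) f
      ⟨Or.inl hfE, fun h => h.2 hfF⟩
      (by rw [hGF]; exact hminF f hfF)
  have : f ∈ backflows E \ E := by
    apply h_nosideeffects
    exact ⟨F', by
      simp only [get_offending_flows, Set.mem_iUnion]
      exact ⟨m, hmACS, hF'off⟩, hfF'⟩
  exact this.2 hfE

lemma filterACS_spec {α : Type*} (M : Set (SecurityInvariant α))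
    (V : Set α) (E : Set (α × α)) (hEfin : E.Finite)
    (h_mono : ∀ m ∈ getACS M, ∀ (E₁ E₂ : Set (α × α)), m V E₁ → E₂ ⊆ E₁ → m V E₂)
    (h_nosideeffects :
      ⋃₀ get_offending_flows (getACS M) V (E ∪ backflows E) ⊆ backflows E \ E) :
    ∀ (l a : List (α × α)), {x | x ∈ l} ⊆ E → {x | x ∈ a} ⊆ E →
      {x | x ∈ filterACS V E M a l} ⊆ E ∧
      {x | x ∈ a} ∪ ((E \ backflows E) ∩ {x | x ∈ l}) ⊆
        {x | x ∈ filterACS V E M a l} := by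
  intro l
  induction l with
  | nil =>
    intro a _ ha
    refine ⟨ha, ?_⟩
    intro x hx
    rcases hx with hx | hx
    · exact hx
    · exact absurd hx.2 (by simp)
  | cons e es ih =>
    intro a hl ha
    have hes : {x | x ∈ es} ⊆ E := fun x hx => hl (List.mem_cons_of_mem _ hx)
    by_cases hc : e ∉ backflows E ∧
        ∀ F ∈ get_offending_flows (getACS M) V
            (E ∪ {x | x ∈ e :: a} ∪ backflows {x | x ∈ e :: a}),
          F ⊆ backflows {x | x ∈ e :: a}
    · rw [filterACS, if_pos hc]
      have hea : {x | x ∈ e :: a} ⊆ E := by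
        intro x hx
        rcases List.mem_cons.mp hx with rfl | hx
        · exact hl List.mem_cons_self
        · exact ha hx
      obtain ⟨h1, h2⟩ := ih (e :: a) hes hea
      refine ⟨h1, ?_⟩
      intro x hx
      apply h2
      rcases hx with hx | ⟨hx1, hx2⟩
      · exact Or.inl (List.mem_cons_of_mem _ hx)
      · rcases List.mem_cons.mp hx2 with rfl | hx2
        · exact Or.inl List.mem_cons_self
        · exact Or.inr ⟨hx1, hx2⟩
    · rw [filterACS, if_neg hc]
      obtain ⟨h1, h2⟩ := ih a hes ha
      refine ⟨h1, ?_⟩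
      intro x hx
      apply h2
      rcases hx with hx | ⟨hx1, hx2⟩
      · exact Or.inl hx
      · rcases List.mem_cons.mp hx2 with rfl | hx2
        · exact absurd (cond_holds M V E hEfin h_mono h_nosideeffects a x ha hx1) hc
        · exact Or.inr ⟨hx1, hx2⟩

theorem stmt_16 {α : Type*} (M : Set (SecurityInvariant α))
    (V : Set α) (E : Set (α × α)) (L : List (α × α))
    (h_empty : ∀ m ∈ M, ∀ V' : Set α, m.pred V' ∅)
    (h_mono : ∀ m ∈ M, ∀ (V' : Set α) (E₁ E₂ : Set (α × α)),
        m.pred V' E₁ → E₂ ⊆ E₁ → m.pred V' E₂)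
    (h_valid : ∀ m ∈ M, m.pred V E)
    (hL : {x | x ∈ L} = E)
    (h_noIFS : getIFS M = ∅)
    (h_nosideeffects :
      ⋃₀ get_offending_flows (getACS M) V (E ∪ backflows E) ⊆ backflows E \ E) :
    E \ backflows E ⊆ {x | x ∈ filterACS V E M [] (filterIFS V E M [] L)} ∧
    E ∪ {x | x ∈ filterACS V E M [] (filterIFS V E M [] L)} ∪
        backflows {x | x ∈ filterACS V E M [] (filterIFS V E M [] L)} =
      E ∪ backflows E := by
  have hEfin : E.Finite := by
    rw [← hL]
    exact L.finite_toSet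
  have h_mono' : ∀ m ∈ getACS M, ∀ (E₁ E₂ : Set (α × α)),
      m V E₁ → E₂ ⊆ E₁ → m V E₂ := by
    rintro m ⟨inv, hinv, _, rfl⟩ E₁ E₂ h1 h2
    exact h_mono inv hinv V E₁ E₂ h1 h2
  rw [filterIFS_noIFS V E M h_noIFS L []]
  have hLrev : {x | x ∈ L.reverse ++ ([] : List (α × α))} = E := by
    rw [← hL]; ext x; simp
  obtain ⟨h1, h2⟩ := filterACS_spec M V E hEfin h_mono' h_nosideeffects
    (L.reverse ++ []) [] (le_of_eq hLrev) (by simp)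
  set R : Set (α × α) := {x | x ∈ filterACS V E M [] (L.reverse ++ [])} with hR
  have hsub : E \ backflows E ⊆ R := by
    intro x hx
    apply h2
    exact Or.inr ⟨hx, hLrev.symm ▸ hx.1⟩
  refine ⟨hsub, ?_⟩
  apply Set.Subset.antisymm
  · apply Set.union_subset (Set.union_subset _ _)
    · exact fun x hx => Or.inr (h1 hx)
    · exact Set.subset_union_left
    · exact fun x hx => Or.inl (h1 hx)
  · intro x hx
    rcases hx with hx | hx
    · exact Or.inl (Or.inl hx)
    · by_cases hxE : x ∈ E
      · exact Or.inl (Or.inl hxE)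
      · refine Or.inr (hsub ⟨hx, ?_⟩)
        intro h
        exact hxE h
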